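/- Let 0 < c < 1/2. There exists C > 0 such that for all w ∈ ℂ with 0 < |w| < c², ∫_{|w|/c < |z| < c} dA(z) / (|z ln|z||² · |ln|w/z||) ≤ C / |ln|w||. -/

import Mathlib

open MeasureTheory

/-- Elementary inequality: for positive `t, s`, `1/(t²s) ≤ (2/(t+s))(1/t² + 1/s²)`. -/
lemma aux_ts (t s : ℝ) (ht : 0 < t) (hs : 0 < s) :
    1 / (t ^ 2 * s) ≤ 2 / (t + s) * (1 / t ^ 2 + 1 / s ^ 2) := by
  rw [div_add_div _ _ (by positivity) (by positivity), div_mul_div_comm,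
    div_le_div_iff₀ (by positivity) (by positivity)]
  nlinarith [sq_nonneg (t - s), mul_pos ht hs, sq_nonneg t, sq_nonneg s,
    mul_pos (mul_pos ht ht) hs, mul_pos (mul_pos hs hs) ht]

/-- FTC computation of the basic 1-dimensional integral. -/
lemma oneD (b p q : ℝ) (hp : 0 < p) (hpq : p < q)
    (h : ∀ y ∈ Set.Icc p q, Real.log y - Real.log b ≠ 0) :
    ∫ y in Set.Ioo p q, 1 / (y * (Real.log y - Real.log b) ^ 2)
      = (Real.log p - Real.log b)⁻¹ - (Real.log q - Real.log b)⁻¹ := by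
  have huIcc : Set.uIcc p q = Set.Icc p q := Set.uIcc_of_le hpq.le
  have hderiv : ∀ y ∈ Set.uIcc p q,
      HasDerivAt (fun y => -(Real.log y - Real.log b)⁻¹)
        (1 / (y * (Real.log y - Real.log b) ^ 2)) y := by
    intro y hy
    rw [huIcc] at hy
    have hy0 : 0 < y := lt_of_lt_of_le hp hy.1
    have h1 : HasDerivAt (fun y => Real.log y - Real.log b) y⁻¹ y :=
      (Real.hasDerivAt_log hy0.ne').sub_const _
    have h2 := (h1.inv (h y hy)).neg
    have h3 : (1 / (y * (Real.log y - Real.log b) ^ 2)) = -(-y⁻¹ / (Real.log y - Real.log b) ^ 2) := by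
      rw [neg_div, neg_neg, inv_eq_one_div, div_div]
    rw [h3]; exact h2
  have hcont : ContinuousOn (fun y => 1 / (y * (Real.log y - Real.log b) ^ 2))
      (Set.uIcc p q) := by
    rw [huIcc]
    apply ContinuousOn.div continuousOn_const
    · exact continuousOn_id.mul
        (((continuousOn_id.log fun y hy => (lt_of_lt_of_le hp hy.1).ne').sub
          continuousOn_const).pow 2)
    · intro y hy
      exact mul_ne_zero (lt_of_lt_of_le hp hy.1).ne' (pow_ne_zero 2 (h y hy))
  have := intervalIntegral.integral_eq_sub_of_hasDerivAt hderiv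
    (hcont.intervalIntegrable)
  rw [← integral_Ioc_eq_integral_Ioo, ← intervalIntegral.integral_of_le hpq.le, this]
  ring

/-- Reduction of the integral of a radial function over an annulus in `ℂ`
to a 1-dimensional integral. -/
lemma radial_integral (p q : ℝ) (hp : 0 < p) (g : ℝ → ℝ) :
    ∫ z in {z : ℂ | p < ‖z‖ ∧ ‖z‖ < q}, g ‖z‖
      = 2 * (volume (Metric.ball (0 : ℂ) 1)).toReal * ∫ y in Set.Ioo p q, y * g y := by
  have hSmeas : MeasurableSet {z : ℂ | p < ‖z‖ ∧ ‖z‖ < q} := by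
    have : IsOpen {z : ℂ | p < ‖z‖ ∧ ‖z‖ < q} := by
      rw [Set.setOf_and]
      exact (isOpen_lt continuous_const continuous_norm).inter
        (isOpen_lt continuous_norm continuous_const)
    exact this.measurableSet
  rw [← integral_indicator hSmeas]
  have hfun : (fun z : ℂ => Set.indicator {z : ℂ | p < ‖z‖ ∧ ‖z‖ < q}
      (fun z : ℂ => g ‖z‖) z) = fun z : ℂ => (Set.Ioo p q).indicator g ‖z‖ := by
    funext z
    simp [Set.indicator_apply, Set.mem_setOf_eq, Set.mem_Ioo]
  rw [hfun, integral_fun_norm_addHaar volume ((Set.Ioo p q).indicator g)]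
  rw [Complex.finrank_real_complex]
  have h1 : (∫ y in Set.Ioi (0:ℝ), y ^ (2 - 1) • (Set.Ioo p q).indicator g y)
      = ∫ y in Set.Ioo p q, y * g y := by
    have : (fun y : ℝ => y ^ (2 - 1) • (Set.Ioo p q).indicator g y)
        = fun y : ℝ => (Set.Ioo p q).indicator (fun y => y * g y) y := by
      funext y
      by_cases hy : y ∈ Set.Ioo p q
      · simp [Set.indicator_of_mem hy, smul_eq_mul]
      · simp [Set.indicator_of_notMem hy]
    rw [this, integral_indicator measurableSet_Ioo, Measure.restrict_restrict measurableSet_Ioo,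
      Set.inter_eq_left.2 (show Set.Ioo p q ⊆ Set.Ioi 0 from fun y hy => lt_trans hp hy.1)]
  rw [h1, nsmul_eq_mul, smul_eq_mul]
  simp only [Measure.real]
  ring

theorem stmt5 (c : ℝ) (hc0 : 0 < c) (hc : c < 1 / 2) :
    ∃ C > 0, ∀ w : ℂ, 0 < ‖w‖ → ‖w‖ < c ^ 2 →
      (∫ z in {z : ℂ | ‖w‖ / c < ‖z‖ ∧ ‖z‖ < c},
          1 / ((‖z‖ * |Real.log ‖z‖|) ^ 2 * |Real.log (‖w‖ / ‖z‖)|))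
        ≤ C / |Real.log ‖w‖| := by
  have hc1 : c < 1 := hc.trans (by norm_num)
  have hlogc : Real.log c < 0 := Real.log_neg hc0 hc1
  set t0 : ℝ := -Real.log c with ht0def
  have ht0 : 0 < t0 := neg_pos.2 hlogc
  set V : ℝ := (volume (Metric.ball (0 : ℂ) 1)).toReal with hVdef
  have hV0 : 0 ≤ V := ENNReal.toReal_nonneg
  refine ⟨8 * V / t0 + 1, by positivity, ?_⟩
  intro w hw hw2
  set a : ℝ := ‖w‖ with hadef
  have hac : 0 < a / c := div_pos hw hc0
  have hacc : a / c < c := (div_lt_iff₀ hc0).2 (by nlinarith)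
  have haca : a < a / c := by
    rw [lt_div_iff₀ hc0]; nlinarith
  have hacl : a < c := by nlinarith
  have ha1 : a < 1 := hacl.trans hc1
  have hla : Real.log a < 0 := Real.log_neg hw ha1
  set L : ℝ := |Real.log a| with hLdef
  have hLeq : L = -Real.log a := abs_of_neg hla
  have hL0 : 0 < L := by rw [hLeq]; linarith
  set S : Set ℂ := {z : ℂ | a / c < ‖z‖ ∧ ‖z‖ < c} with hSdef
  have hSmeas : MeasurableSet S := by
    have : IsOpen S := by
      rw [hSdef, Set.setOf_and]
      exact (isOpen_lt continuous_const continuous_norm).inter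
        (isOpen_lt continuous_norm continuous_const)
    exact this.measurableSet
  -- basic facts on the annulus
  have hfacts : ∀ z : ℂ, z ∈ S → 0 < ‖z‖ ∧ Real.log ‖z‖ < 0 ∧
      0 < Real.log ‖z‖ - Real.log a := by
    intro z hz
    obtain ⟨hr1, hr2⟩ := hz
    have hr0 : 0 < ‖z‖ := lt_trans hac hr1
    refine ⟨hr0, Real.log_neg hr0 (hr2.trans hc1), ?_⟩
    have := Real.log_lt_log hw (lt_trans haca hr1)
    linarith
  -- the two comparison radial functions
  set g1 : ℂ → ℝ := fun z => 1 / (‖z‖ * Real.log ‖z‖) ^ 2 with hg1def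
  set g2 : ℂ → ℝ := fun z => 1 / (‖z‖ * (Real.log ‖z‖ - Real.log a)) ^ 2 with hg2def
  -- pointwise bound
  have hpt : ∀ z : ℂ, z ∈ S →
      1 / ((‖z‖ * |Real.log ‖z‖|) ^ 2 * |Real.log (a / ‖z‖)|)
        ≤ 2 / L * (g1 z + g2 z) := by
    intro z hz
    obtain ⟨hr0, hlr, hs⟩ := hfacts z hz
    have ht : 0 < -Real.log ‖z‖ := by linarith
    have habs1 : |Real.log ‖z‖| = -Real.log ‖z‖ := abs_of_neg hlr
    have habs2 : |Real.log (a / ‖z‖)| = Real.log ‖z‖ - Real.log a := by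
      rw [Real.log_div hw.ne' hr0.ne', abs_of_neg (by linarith)]; ring
    have hts : -Real.log ‖z‖ + (Real.log ‖z‖ - Real.log a) = L := by
      rw [hLeq]; ring
    calc 1 / ((‖z‖ * |Real.log ‖z‖|) ^ 2 * |Real.log (a / ‖z‖)|)
        = 1 / ‖z‖ ^ 2 *
            (1 / ((-Real.log ‖z‖) ^ 2 * (Real.log ‖z‖ - Real.log a))) := by
          rw [habs1, habs2, one_div_mul_one_div]
          congr 1
          ring
      _ ≤ 1 / ‖z‖ ^ 2 *
            (2 / (-Real.log ‖z‖ + (Real.log ‖z‖ - Real.log a)) *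
              (1 / (-Real.log ‖z‖) ^ 2 + 1 / (Real.log ‖z‖ - Real.log a) ^ 2)) :=
          mul_le_mul_of_nonneg_left (aux_ts _ _ ht hs) (by positivity)
      _ = 2 / L * (g1 z + g2 z) := by
          simp only [hg1def, hg2def]
          rw [hts, neg_sq, mul_pow, mul_pow, ← one_div_mul_one_div,
            ← one_div_mul_one_div]
          ring
  -- integrability of the comparison functions on S
  set K : Set ℂ := Metric.closedBall (0 : ℂ) c \ Metric.ball 0 (a / c) with hKdef
  have hKcomp : IsCompact K := (isCompact_closedBall _ _).diff Metric.isOpen_ball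
  have hmemK : ∀ z ∈ K, a / c ≤ ‖z‖ ∧ ‖z‖ ≤ c := by
    intro z hz
    exact ⟨not_lt.1 fun hlt => hz.2 (mem_ball_zero_iff.2 hlt),
      mem_closedBall_zero_iff.1 hz.1⟩
  have hSK : S ⊆ K := by
    intro z hz
    exact ⟨mem_closedBall_zero_iff.2 hz.2.le,
      fun hb => absurd (mem_ball_zero_iff.1 hb) (not_lt.2 hz.1.le)⟩
  have hKfacts : ∀ z ∈ K, 0 < ‖z‖ ∧ Real.log ‖z‖ < 0 ∧
      0 < Real.log ‖z‖ - Real.log a := by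
    intro z hz
    obtain ⟨h1, h2⟩ := hmemK z hz
    have hr0 : 0 < ‖z‖ := lt_of_lt_of_le hac h1
    refine ⟨hr0, Real.log_neg hr0 (lt_of_le_of_lt h2 hc1), ?_⟩
    have := Real.log_lt_log hw (lt_of_lt_of_le haca h1)
    linarith
  have hnormK : ContinuousOn (fun z : ℂ => ‖z‖) K := continuous_norm.continuousOn
  have hlogK : ContinuousOn (fun z : ℂ => Real.log ‖z‖) K :=
    hnormK.log fun z hz => (hKfacts z hz).1.ne'
  have hint1 : IntegrableOn g1 S := by
    apply IntegrableOn.mono_set _ hSK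
    apply ContinuousOn.integrableOn_compact hKcomp
    apply ContinuousOn.div continuousOn_const ((hnormK.mul hlogK).pow 2)
    intro z hz
    exact pow_ne_zero 2 (mul_ne_zero (hKfacts z hz).1.ne' (hKfacts z hz).2.1.ne)
  have hint2 : IntegrableOn g2 S := by
    apply IntegrableOn.mono_set _ hSK
    apply ContinuousOn.integrableOn_compact hKcomp
    apply ContinuousOn.div continuousOn_const
      ((hnormK.mul (hlogK.sub continuousOn_const)).pow 2)
    intro z hz
    exact pow_ne_zero 2 (mul_ne_zero (hKfacts z hz).1.ne' (hKfacts z hz).2.2.ne')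
  have hintg : IntegrableOn (fun z => 2 / L * (g1 z + g2 z)) S :=
    (hint1.add hint2).const_mul _
  -- comparison
  have hmono : (∫ z in S, 1 / ((‖z‖ * |Real.log ‖z‖|) ^ 2 * |Real.log (a / ‖z‖)|))
      ≤ ∫ z in S, 2 / L * (g1 z + g2 z) :=
    integral_mono_of_nonneg (Filter.Eventually.of_forall fun z => by positivity)
      hintg ((ae_restrict_iff' hSmeas).2 (Filter.Eventually.of_forall hpt))
  -- compute the comparison integral
  have hsplit : (∫ z in S, 2 / L * (g1 z + g2 z))
      = 2 / L * ((∫ z in S, g1 z) + ∫ z in S, g2 z) := by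
    rw [integral_const_mul, integral_add hint1 hint2]
  have hrad1 : (∫ z in S, g1 z)
      = 2 * V * ∫ y in Set.Ioo (a / c) c, y * (1 / (y * Real.log y) ^ 2) :=
    radial_integral (a / c) c hac (fun y => 1 / (y * Real.log y) ^ 2)
  have hrad2 : (∫ z in S, g2 z)
      = 2 * V * ∫ y in Set.Ioo (a / c) c,
          y * (1 / (y * (Real.log y - Real.log a)) ^ 2) :=
    radial_integral (a / c) c hac (fun y => 1 / (y * (Real.log y - Real.log a)) ^ 2)
  -- bound the 1-dimensional integrals
  have hIoofacts : ∀ y ∈ Set.Icc (a / c) c, 0 < y ∧ Real.log y < 0 ∧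
      0 < Real.log y - Real.log a := by
    intro y hy
    have hy0 : 0 < y := lt_of_lt_of_le hac hy.1
    refine ⟨hy0, Real.log_neg hy0 (lt_of_le_of_lt hy.2 hc1), ?_⟩
    have := Real.log_lt_log hw (lt_of_lt_of_le haca hy.1)
    linarith
  have h1d1 : (∫ y in Set.Ioo (a / c) c, y * (1 / (y * Real.log y) ^ 2)) ≤ 1 / t0 := by
    have hcongr : (∫ y in Set.Ioo (a / c) c, y * (1 / (y * Real.log y) ^ 2))
        = ∫ y in Set.Ioo (a / c) c, 1 / (y * (Real.log y - Real.log 1) ^ 2) := by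
      apply setIntegral_congr_fun measurableSet_Ioo
      intro y hy
      obtain ⟨hy0, hly, -⟩ := hIoofacts y (Set.mem_Icc_of_Ioo hy)
      show y * (1 / (y * Real.log y) ^ 2) = 1 / (y * (Real.log y - Real.log 1) ^ 2)
      rw [Real.log_one, sub_zero]
      field_simp [hy0.ne', hly.ne]
    rw [hcongr, oneD 1 (a / c) c hac hacc fun y hy => by
      rw [Real.log_one, sub_zero]; exact (hIoofacts y hy).2.1.ne]
    rw [Real.log_one, sub_zero, sub_zero]
    have h1 : (Real.log (a / c))⁻¹ ≤ 0 :=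
      inv_nonpos.2 (Real.log_neg hac (hacc.trans hc1)).le
    have h2 : (Real.log c)⁻¹ = -(1 / t0) := by
      rw [ht0def, one_div, inv_neg, neg_neg]
    linarith
  have h1d2 : (∫ y in Set.Ioo (a / c) c,
      y * (1 / (y * (Real.log y - Real.log a)) ^ 2)) ≤ 1 / t0 := by
    have hcongr : (∫ y in Set.Ioo (a / c) c,
        y * (1 / (y * (Real.log y - Real.log a)) ^ 2))
        = ∫ y in Set.Ioo (a / c) c, 1 / (y * (Real.log y - Real.log a) ^ 2) := by
      apply setIntegral_congr_fun measurableSet_Ioo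
      intro y hy
      obtain ⟨hy0, -, hsy⟩ := hIoofacts y (Set.mem_Icc_of_Ioo hy)
      show y * (1 / (y * (Real.log y - Real.log a)) ^ 2)
        = 1 / (y * (Real.log y - Real.log a) ^ 2)
      field_simp [hy0.ne', hsy.ne']
    rw [hcongr, oneD a (a / c) c hac hacc fun y hy => (hIoofacts y hy).2.2.ne']
    have h1 : Real.log (a / c) - Real.log a = t0 := by
      rw [Real.log_div hw.ne' hc0.ne', ht0def]; ring
    have h2 : 0 < Real.log c - Real.log a := by
      have := Real.log_lt_log hw hacl
      linarith
    have h3 : 0 ≤ (Real.log c - Real.log a)⁻¹ := inv_nonneg.2 h2.le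
    rw [h1, one_div]
    linarith
  -- put everything together
  calc (∫ z in S, 1 / ((‖z‖ * |Real.log ‖z‖|) ^ 2 * |Real.log (a / ‖z‖)|))
      ≤ ∫ z in S, 2 / L * (g1 z + g2 z) := hmono
    _ = 2 / L * (2 * V * (∫ y in Set.Ioo (a / c) c, y * (1 / (y * Real.log y) ^ 2))
          + 2 * V * ∫ y in Set.Ioo (a / c) c,
              y * (1 / (y * (Real.log y - Real.log a)) ^ 2)) := by
        rw [hsplit, hrad1, hrad2]
    _ ≤ 2 / L * (2 * V * (1 / t0) + 2 * V * (1 / t0)) := by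
        have h2L : 0 ≤ 2 / L := by positivity
        have hV2 : 0 ≤ 2 * V := by linarith
        exact mul_le_mul_of_nonneg_left
          (add_le_add (mul_le_mul_of_nonneg_left h1d1 hV2)
            (mul_le_mul_of_nonneg_left h1d2 hV2)) h2L
    _ ≤ (8 * V / t0 + 1) / L := by
        have hx : 2 / L * (2 * V * (1 / t0) + 2 * V * (1 / t0)) = (8 * V / t0) / L := by
          ring
        rw [hx]
        exact (div_le_div_iff_of_pos_right hL0).2 (by linarith)
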